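/- Suppose Q is in rational normal form with parameters z and k_1,…,k_d, and γ is generic. Then every 2-cocycle α on g(γ,Q) is cohomologous to a ℂ-linear combination of the two 2-cocycles α_1 and α_2: there exist c_1,c_2∈ℂ and a linear map f:g→ℂ such that α = c_1α_1 + c_2α_2 + ψ_f, where α_1(L_m,L_n)=δ_{m+n,0}·((m_γ)^3−m_γ)/12 if m∈R and 0 if m∉R (with m_γ=(γ|m)/(γ|k_1e_1)), and α_2(L_r,L_s)=δ_{r+s,0}·σ(r,−r)·(γ|r)/(γ|k_1e_1) if r∈ℤ^d∖R and 0 if r∈R. Consequently the universal central extension of g has a two-dimensional center. -/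

import Mathlib

open scoped BigOperators

namespace QTorus

/-- σ(m,n) = ∏_{i<j} q_{ji}^{m_j n_i}. -/
noncomputable def qsigma (d : ℕ) (Q : Matrix (Fin d) (Fin d) ℂ) (m n : Fin d → ℤ) : ℂ :=
  ∏ i : Fin d, ∏ j : Fin d, if i < j then Q j i ^ (m j * n i) else 1

/-- The radical subgroup R = {m | σ(m,n)=σ(n,m) for all n}. -/
def Rset (d : ℕ) (Q : Matrix (Fin d) (Fin d) ℂ) : Set (Fin d → ℤ) :=
  {m | ∀ n : Fin d → ℤ, qsigma d Q m n = qsigma d Q n m}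

/-- (γ|m) = ∑ γ_i m_i. -/
noncomputable def ip (d : ℕ) (γ : Fin d → ℂ) (m : Fin d → ℤ) : ℂ :=
  ∑ i : Fin d, γ i * (m i : ℂ)

/-- The underlying vector space of g(γ,Q): formal ℂ-linear combinations of basis
vectors indexed by ℤ^d. -/
abbrev g (d : ℕ) := (Fin d → ℤ) →₀ ℂ

/-- The basis vector L_m. -/
noncomputable def L (d : ℕ) (m : Fin d → ℤ) : g d := Finsupp.single m 1

/-- Hypotheses on the matrix Q: nonzero entries, q_{ii}=1, q_{ij}q_{ji}=1. -/
def QOk (d : ℕ) (Q : Matrix (Fin d) (Fin d) ℂ) : Prop :=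
  (∀ i, Q i i = 1) ∧ (∀ i j, Q i j * Q j i = 1) ∧ (∀ i j, Q i j ≠ 0)

/-- γ is generic: γ_1,…,γ_d are linearly independent over ℚ. -/
def Generic (d : ℕ) (γ : Fin d → ℂ) : Prop := LinearIndependent ℚ γ

open Classical in
/-- Structure constants of g(γ,Q): [L_m, L_n] = sc(m,n) • L_{m+n}. -/
noncomputable def sc (d : ℕ) (Q : Matrix (Fin d) (Fin d) ℂ) (γ : Fin d → ℂ)
    (m n : Fin d → ℤ) : ℂ :=
  if m ∈ Rset d Q then
    (if n ∈ Rset d Q then qsigma d Q m n * ip d γ (n - m)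
     else qsigma d Q m n * ip d γ n)
  else
    (if n ∈ Rset d Q then -(qsigma d Q n m * ip d γ m)
     else qsigma d Q m n - qsigma d Q n m)

/-- The bracket of g(γ,Q), as the bilinear extension of
[L_m, L_n] = sc(m,n) • L_{m+n}. -/
noncomputable def br (d : ℕ) (Q : Matrix (Fin d) (Fin d) ℂ) (γ : Fin d → ℂ)
    (x y : g d) : g d :=
  x.sum fun m a => y.sum fun n b => Finsupp.single (m + n) (a * b * sc d Q γ m n)

/-- A Lie algebra automorphism of g(γ,Q): a linear equivalence preserving the bracket. -/
def IsAut (d : ℕ) (Q : Matrix (Fin d) (Fin d) ℂ) (γ : Fin d → ℂ)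
    (θ : g d ≃ₗ[ℂ] g d) : Prop :=
  ∀ x y : g d, θ (br d Q γ x y) = br d Q γ (θ x) (θ y)

/-- A derivation of g(γ,Q). -/
def IsDer (d : ℕ) (Q : Matrix (Fin d) (Fin d) ℂ) (γ : Fin d → ℂ)
    (D : g d →ₗ[ℂ] g d) : Prop :=
  ∀ x y : g d, D (br d Q γ x y) = br d Q γ (D x) y + br d Q γ x (D y)

open Classical in
/-- δ(n,R) = 1 if n ∈ R, 0 otherwise. -/
noncomputable def deltaR (d : ℕ) (Q : Matrix (Fin d) (Fin d) ℂ) (n : Fin d → ℤ) : ℕ :=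
  if n ∈ Rset d Q then 1 else 0

/-- A 2-cocycle on g(γ,Q). -/
def IsCocycle (d : ℕ) (Q : Matrix (Fin d) (Fin d) ℂ) (γ : Fin d → ℂ)
    (α : g d →ₗ[ℂ] g d →ₗ[ℂ] ℂ) : Prop :=
  (∀ x y : g d, α x y = - α y x) ∧
  (∀ x y z : g d,
    α (br d Q γ x y) z + α (br d Q γ z x) y + α (br d Q γ y z) x = 0)

/-- i ↔ j is one of the exceptional index pairs (2l-1,2l) (1-based) of the rational
normal form. Here indices are 0-based. -/
def OffDiagPair (z : ℕ) (i j : ℕ) : Prop :=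
  ∃ l : ℕ, l < z ∧ ((i = 2 * l ∧ j = 2 * l + 1) ∨ (i = 2 * l + 1 ∧ j = 2 * l))

/-- Q is in rational normal form with parameters z and k_1,…,k_d (0-based indexing:
the paper's pair (2i-1,2i) is the Lean pair (2l, 2l+1) with l = i-1). -/
def IsRNF (d : ℕ) (Q : Matrix (Fin d) (Fin d) ℂ) (z : ℕ) (k : Fin d → ℕ) : Prop :=
  0 < z ∧ 2 * z ≤ d ∧
  (∀ i j : Fin d, ¬ OffDiagPair z i.val j.val → Q i j = 1) ∧
  (∀ (l : ℕ) (_ : l < z) (hi : 2 * l < d) (hj : 2 * l + 1 < d),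
      IsPrimitiveRoot (Q ⟨2 * l, hi⟩ ⟨2 * l + 1, hj⟩) (k ⟨2 * l, hi⟩) ∧
      Q ⟨2 * l + 1, hj⟩ ⟨2 * l, hi⟩ = (Q ⟨2 * l, hi⟩ ⟨2 * l + 1, hj⟩)⁻¹ ∧
      k ⟨2 * l + 1, hj⟩ = k ⟨2 * l, hi⟩ ∧
      1 < k ⟨2 * l, hi⟩) ∧
  (∀ (i : ℕ) (_ : i + 1 < 2 * z) (h1 : i < d) (h2 : i + 1 < d),
      k ⟨i + 1, h2⟩ ∣ k ⟨i, h1⟩) ∧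
  (∀ i : Fin d, 2 * z ≤ i.val → k i = 1)

/-- The vector k_1 e_1 ∈ ℤ^d. -/
noncomputable def k1e1 (d : ℕ) (k : Fin d → ℕ) (hd : 0 < d) : Fin d → ℤ :=
  Pi.single ⟨0, hd⟩ (k ⟨0, hd⟩ : ℤ)

/-- A 2-cocycle is normalized if α(L_{m-k₁e₁}, L_{k₁e₁})=0 for m ∈ R, m ≠ 2k₁e₁,
α(L_0, L_{2k₁e₁})=0, α(L_0, L_s)=0 for s ∉ R, and α(L_m,L_n)=0 whenever m+n ≠ 0. -/
def IsNormalized (d : ℕ) (Q : Matrix (Fin d) (Fin d) ℂ) (k : Fin d → ℕ) (hd : 0 < d)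
    (α : g d →ₗ[ℂ] g d →ₗ[ℂ] ℂ) : Prop :=
  (∀ m ∈ Rset d Q, m ≠ 2 • k1e1 d k hd →
      α (L d (m - k1e1 d k hd)) (L d (k1e1 d k hd)) = 0) ∧
  α (L d 0) (L d (2 • k1e1 d k hd)) = 0 ∧
  (∀ s, s ∉ Rset d Q → α (L d 0) (L d s) = 0) ∧
  (∀ m n : Fin d → ℤ, m + n ≠ 0 → α (L d m) (L d n) = 0)

/-- The degree derivation ∂_i, acting by ∂_i(L_m) = m_i L_m. -/
noncomputable def deg (d : ℕ) (i : Fin d) (y : g d) : g d :=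
  y.sum fun m a => Finsupp.single m ((m i : ℂ) * a)

open Classical in
/-- The 2-cocycle α₁: α₁(L_m,L_n) = δ_{m+n,0}((m_γ)³-m_γ)/12 for m ∈ R, 0 otherwise,
where m_γ = (γ|m)/(γ|k₁e₁). -/
noncomputable def alpha1 (d : ℕ) (Q : Matrix (Fin d) (Fin d) ℂ) (γ : Fin d → ℂ)
    (k : Fin d → ℕ) (hd : 0 < d) (x y : g d) : ℂ :=
  x.sum fun m a => y.sum fun n b => a * b *
    (if m ∈ Rset d Q ∧ m + n = 0 then
       ((ip d γ m / ip d γ (k1e1 d k hd)) ^ 3 - ip d γ m / ip d γ (k1e1 d k hd)) / 12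
     else 0)

open Classical in
/-- The 2-cocycle α₂: α₂(L_r,L_s) = δ_{r+s,0} σ(r,-r)(γ|r)/(γ|k₁e₁) for r ∉ R,
0 otherwise. -/
noncomputable def alpha2 (d : ℕ) (Q : Matrix (Fin d) (Fin d) ℂ) (γ : Fin d → ℂ)
    (k : Fin d → ℕ) (hd : 0 < d) (x y : g d) : ℂ :=
  x.sum fun m a => y.sum fun n b => a * b *
    (if m ∉ Rset d Q ∧ m + n = 0 then
       qsigma d Q m (-m) * (ip d γ m / ip d γ (k1e1 d k hd))
     else 0)

end QTorus

open QTorus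

namespace QTorus

variable {d : ℕ}

/-! ### ip lemmas -/

lemma ip_add (γ : Fin d → ℂ) (m n : Fin d → ℤ) :
    ip d γ (m + n) = ip d γ m + ip d γ n := by
  simp [ip, mul_add, Finset.sum_add_distrib]

lemma ip_zero (γ : Fin d → ℂ) : ip d γ 0 = 0 := by simp [ip]

lemma ip_neg (γ : Fin d → ℂ) (m : Fin d → ℤ) : ip d γ (-m) = -ip d γ m := by
  simp [ip, Finset.sum_neg_distrib]

lemma ip_sub (γ : Fin d → ℂ) (m n : Fin d → ℤ) :
    ip d γ (m - n) = ip d γ m - ip d γ n := by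
  rw [sub_eq_add_neg, ip_add, ip_neg]; ring

lemma ip_zsmul (γ : Fin d → ℂ) (j : ℤ) (m : Fin d → ℤ) :
    ip d γ (j • m) = (j : ℂ) * ip d γ m := by
  simp only [ip, Finset.mul_sum]
  refine Finset.sum_congr rfl fun i _ => ?_
  push_cast [Pi.smul_apply, smul_eq_mul]
  ring

lemma generic_ne {γ : Fin d → ℂ} (hγ : Generic d γ) {m : Fin d → ℤ}
    (hm : m ≠ 0) : ip d γ m ≠ 0 := by
  intro h
  apply hm
  have h2 : ∑ i : Fin d, ((m i : ℚ) : ℂ) • γ i = 0 := by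
    rw [← h]; unfold ip
    refine Finset.sum_congr rfl fun i _ => ?_
    push_cast [smul_eq_mul]; ring
  have h3 : ∑ i : Fin d, (fun i => (m i : ℚ)) i • γ i = 0 := by
    rw [← h2]
    refine Finset.sum_congr rfl fun i _ => ?_
    norm_num [Rat.smul_def]
  have := (Fintype.linearIndependent_iff.mp hγ) (fun i => (m i : ℚ)) h3
  funext i
  have h4 : (m i : ℚ) = 0 := this i
  exact_mod_cast h4

/-! ### index helpers and the qsigma product formula -/

def idx (hd : 0 < d) (i : ℕ) : Fin d := if h : i < d then ⟨i, h⟩ else ⟨0, hd⟩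

lemma idx_val (hd : 0 < d) {i : ℕ} (h : i < d) : (idx hd i).val = i := by
  simp [idx, h]

section RNF

variable (hd : 0 < d) {Q : Matrix (Fin d) (Fin d) ℂ} {z : ℕ} {k : Fin d → ℕ}

/-- `A l` is the index 2l, `B l` the index 2l+1. -/
noncomputable def Aidx (hd : 0 < d) (l : ℕ) : Fin d := idx hd (2 * l)
noncomputable def Bidx (hd : 0 < d) (l : ℕ) : Fin d := idx hd (2 * l + 1)

variable (hRNF : IsRNF d Q z k)
include hd hRNF

lemma lt_d_of_lt_z {l : ℕ} (hl : l < z) : 2 * l + 1 < d :=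
  lt_of_lt_of_le (by omega) hRNF.2.1

lemma Aidx_val {l : ℕ} (hl : l < z) : (Aidx hd l).val = 2 * l :=
  idx_val hd (by have := lt_d_of_lt_z hd hRNF hl; omega)

lemma Bidx_val {l : ℕ} (hl : l < z) : (Bidx hd l).val = 2 * l + 1 :=
  idx_val hd (lt_d_of_lt_z hd hRNF hl)

lemma qsigma_eq (m n : Fin d → ℤ) :
    qsigma d Q m n = ∏ l ∈ Finset.range z,
      Q (Bidx hd l) (Aidx hd l) ^ (m (Bidx hd l) * n (Aidx hd l)) := by
  classical
  unfold qsigma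
  rw [← Finset.prod_product' (Finset.univ) (Finset.univ)
      (fun i j => if i < j then Q j i ^ (m j * n i) else 1)]
  set S : Finset (Fin d × Fin d) :=
    (Finset.range z).image (fun l => (Aidx hd l, Bidx hd l)) with hS
  have hsub : S ⊆ Finset.univ ×ˢ Finset.univ := by
    intro p _; simp
  have hvan : ∀ p ∈ Finset.univ ×ˢ Finset.univ, p ∉ S →
      (if p.1 < p.2 then Q p.2 p.1 ^ (m p.2 * n p.1) else 1) = 1 := by
    rintro ⟨i, j⟩ _ hp
    by_cases hij : i < j
    · rw [if_pos hij]
      by_cases hq : Q j i = 1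
      · rw [hq, one_zpow]
      · exfalso
        have hod : OffDiagPair z j.val i.val := by
          by_contra hc
          exact hq (hRNF.2.2.1 j i hc)
        obtain ⟨l, hl, hcase⟩ := hod
        rcases hcase with ⟨h1, h2⟩ | ⟨h1, h2⟩
        · have : i.val < j.val := hij
          omega
        · apply hp
          rw [hS]
          refine Finset.mem_image.mpr ⟨l, Finset.mem_range.mpr hl, ?_⟩
          have hA : (Aidx hd l).val = 2 * l := Aidx_val hd hRNF hl
          have hB : (Bidx hd l).val = 2 * l + 1 := Bidx_val hd hRNF hl
          ext
          · simp only []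
            omega
          · simp only []
            omega
    · rw [if_neg hij]
  rw [← Finset.prod_subset hsub (by intro p hp hnp; exact hvan p hp hnp)]
  rw [hS, Finset.prod_image]
  · refine Finset.prod_congr rfl fun l hl => ?_
    have hlz := Finset.mem_range.mp hl
    have hA : (Aidx hd l).val = 2 * l := Aidx_val hd hRNF hlz
    have hB : (Bidx hd l).val = 2 * l + 1 := Bidx_val hd hRNF hlz
    have hlt : Aidx hd l < Bidx hd l := by
      rw [Fin.lt_def, hA, hB]; omega
    rw [if_pos hlt]
  · intro x hx y hy hxy
    have hxz := Finset.mem_range.mp hx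
    have hyz := Finset.mem_range.mp hy
    have : (Aidx hd x).val = (Aidx hd y).val := congrArg Fin.val (Prod.ext_iff.mp hxy).1
    rw [Aidx_val hd hRNF hxz, Aidx_val hd hRNF hyz] at this
    omega

/-! ### R is a subgroup; sigma consequences -/

lemma Aidx_eq {l : ℕ} (hl : l < z) (hi : 2 * l < d) : Aidx hd l = ⟨2 * l, hi⟩ :=
  Fin.ext (Aidx_val hd hRNF hl)

lemma Bidx_eq {l : ℕ} (hl : l < z) (hj : 2 * l + 1 < d) : Bidx hd l = ⟨2 * l + 1, hj⟩ :=
  Fin.ext (Bidx_val hd hRNF hl)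

lemma Aidx_ne_Bidx {l l' : ℕ} (hl : l < z) (hl' : l' < z) :
    Aidx hd l ≠ Bidx hd l' := by
  intro h
  have := congrArg Fin.val h
  rw [Aidx_val hd hRNF hl, Bidx_val hd hRNF hl'] at this
  omega

lemma Bidx_inj {l l' : ℕ} (hl : l < z) (hl' : l' < z) (h : Bidx hd l = Bidx hd l') :
    l = l' := by
  have := congrArg Fin.val h
  rw [Bidx_val hd hRNF hl, Bidx_val hd hRNF hl'] at this
  omega

lemma Aidx_inj {l l' : ℕ} (hl : l < z) (hl' : l' < z) (h : Aidx hd l = Aidx hd l') :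
    l = l' := by
  have := congrArg Fin.val h
  rw [Aidx_val hd hRNF hl, Aidx_val hd hRNF hl'] at this
  omega

lemma qB_zpow_eq_one_iff {l : ℕ} (hl : l < z) (t : ℤ) :
    Q (Bidx hd l) (Aidx hd l) ^ t = 1 ↔ (k (Aidx hd l) : ℤ) ∣ t := by
  have hi : 2 * l < d := by have := lt_d_of_lt_z hd hRNF hl; omega
  have hj : 2 * l + 1 < d := lt_d_of_lt_z hd hRNF hl
  obtain ⟨hprim, hinv, -, -⟩ := hRNF.2.2.2.1 l hl hi hj
  rw [Aidx_eq hd hRNF hl hi, Bidx_eq hd hRNF hl hj, hinv, inv_zpow, inv_eq_one]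
  exact hprim.zpow_eq_one_iff_dvd t

omit hRNF in
/-- Divisibility condition characterizing R. -/
def RD (hd : 0 < d) (z : ℕ) (k : Fin d → ℕ) (m : Fin d → ℤ) : Prop :=
  ∀ l : ℕ, l < z →
    (k (Aidx hd l) : ℤ) ∣ m (Aidx hd l) ∧ (k (Aidx hd l) : ℤ) ∣ m (Bidx hd l)

lemma qsigma_one_left {m : Fin d → ℤ} (h : RD hd z k m) (n : Fin d → ℤ) :
    qsigma d Q m n = 1 := by
  rw [qsigma_eq hd hRNF]
  refine Finset.prod_eq_one fun l hl => ?_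
  have hlz := Finset.mem_range.mp hl
  exact (qB_zpow_eq_one_iff hd hRNF hlz _).mpr (Dvd.dvd.mul_right (h l hlz).2 _)

lemma qsigma_one_right {m : Fin d → ℤ} (h : RD hd z k m) (n : Fin d → ℤ) :
    qsigma d Q n m = 1 := by
  rw [qsigma_eq hd hRNF]
  refine Finset.prod_eq_one fun l hl => ?_
  have hlz := Finset.mem_range.mp hl
  exact (qB_zpow_eq_one_iff hd hRNF hlz _).mpr (Dvd.dvd.mul_left (h l hlz).1 _)

lemma memR_of_RD {m : Fin d → ℤ} (h : RD hd z k m) : m ∈ Rset d Q := by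
  intro n
  rw [qsigma_one_left hd hRNF h, qsigma_one_right hd hRNF h]

lemma qsigma_single_A_left {l : ℕ} (hl : l < z) (c : ℤ) (r : Fin d → ℤ) :
    qsigma d Q (Pi.single (Aidx hd l) c) r = 1 := by
  rw [qsigma_eq hd hRNF]
  refine Finset.prod_eq_one fun l' hl' => ?_
  have hlz := Finset.mem_range.mp hl'
  rw [Pi.single_eq_of_ne (Ne.symm (Aidx_ne_Bidx hd hRNF hl hlz)), zero_mul, zpow_zero]

lemma qsigma_single_B_right {l : ℕ} (hl : l < z) (c : ℤ) (r : Fin d → ℤ) :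
    qsigma d Q r (Pi.single (Bidx hd l) c) = 1 := by
  rw [qsigma_eq hd hRNF]
  refine Finset.prod_eq_one fun l' hl' => ?_
  have hlz := Finset.mem_range.mp hl'
  rw [Pi.single_eq_of_ne (Aidx_ne_Bidx hd hRNF hlz hl), mul_zero, zpow_zero]

lemma qsigma_single_B_left {l : ℕ} (hl : l < z) (c : ℤ) (r : Fin d → ℤ) :
    qsigma d Q (Pi.single (Bidx hd l) c) r
      = Q (Bidx hd l) (Aidx hd l) ^ (c * r (Aidx hd l)) := by
  rw [qsigma_eq hd hRNF]
  rw [Finset.prod_eq_single l]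
  · rw [Pi.single_eq_same]
  · intro l' hl' hne
    have hlz := Finset.mem_range.mp hl'
    have : Bidx hd l ≠ Bidx hd l' := fun h => hne (Bidx_inj hd hRNF hl hlz h).symm
    rw [Pi.single_eq_of_ne (Ne.symm this), zero_mul, zpow_zero]
  · intro h
    exact absurd (Finset.mem_range.mpr hl) h

lemma qsigma_single_A_right {l : ℕ} (hl : l < z) (c : ℤ) (r : Fin d → ℤ) :
    qsigma d Q r (Pi.single (Aidx hd l) c)
      = Q (Bidx hd l) (Aidx hd l) ^ (r (Bidx hd l) * c) := by
  rw [qsigma_eq hd hRNF]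
  rw [Finset.prod_eq_single l]
  · rw [Pi.single_eq_same]
  · intro l' hl' hne
    have hlz := Finset.mem_range.mp hl'
    have : Aidx hd l ≠ Aidx hd l' := fun h => hne (Aidx_inj hd hRNF hl hlz h).symm
    rw [Pi.single_eq_of_ne (Ne.symm this), mul_zero, zpow_zero]
  · intro h
    exact absurd (Finset.mem_range.mpr hl) h

lemma RD_of_memR {m : Fin d → ℤ} (h : m ∈ Rset d Q) : RD hd z k m := by
  intro l hl
  constructor
  · have h1 := h (Pi.single (Bidx hd l) 1)
    rw [qsigma_single_B_right hd hRNF hl, qsigma_single_B_left hd hRNF hl] at h1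
    rw [one_mul] at h1
    exact (qB_zpow_eq_one_iff hd hRNF hl _).mp h1.symm
  · have h1 := h (Pi.single (Aidx hd l) 1)
    rw [qsigma_single_A_right hd hRNF hl, qsigma_single_A_left hd hRNF hl] at h1
    rw [mul_one] at h1
    exact (qB_zpow_eq_one_iff hd hRNF hl _).mp h1

lemma memR_iff_RD {m : Fin d → ℤ} : m ∈ Rset d Q ↔ RD hd z k m :=
  ⟨RD_of_memR hd hRNF, memR_of_RD hd hRNF⟩

variable (hQ : QOk d Q)
include hQ

lemma qsigma_add_left (m m' n : Fin d → ℤ) :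
    qsigma d Q (m + m') n = qsigma d Q m n * qsigma d Q m' n := by
  rw [qsigma_eq hd hRNF, qsigma_eq hd hRNF, qsigma_eq hd hRNF,
    ← Finset.prod_mul_distrib]
  refine Finset.prod_congr rfl fun l _ => ?_
  rw [← zpow_add₀ (hQ.2.2 _ _), Pi.add_apply, add_mul]

lemma qsigma_add_right (m n n' : Fin d → ℤ) :
    qsigma d Q m (n + n') = qsigma d Q m n * qsigma d Q m n' := by
  rw [qsigma_eq hd hRNF, qsigma_eq hd hRNF, qsigma_eq hd hRNF,
    ← Finset.prod_mul_distrib]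
  refine Finset.prod_congr rfl fun l _ => ?_
  rw [← zpow_add₀ (hQ.2.2 _ _), Pi.add_apply, mul_add]

lemma qsigma_neg_right (m n : Fin d → ℤ) :
    qsigma d Q m (-n) = (qsigma d Q m n)⁻¹ := by
  rw [qsigma_eq hd hRNF, qsigma_eq hd hRNF, ← Finset.prod_inv_distrib]
  refine Finset.prod_congr rfl fun l _ => ?_
  rw [← zpow_neg, Pi.neg_apply, mul_neg]

lemma qsigma_neg_left (m n : Fin d → ℤ) :
    qsigma d Q (-m) n = (qsigma d Q m n)⁻¹ := by
  rw [qsigma_eq hd hRNF, qsigma_eq hd hRNF, ← Finset.prod_inv_distrib]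
  refine Finset.prod_congr rfl fun l _ => ?_
  rw [← zpow_neg, Pi.neg_apply, neg_mul]

lemma qsigma_ne_zero (m n : Fin d → ℤ) : qsigma d Q m n ≠ 0 := by
  rw [qsigma_eq hd hRNF]
  exact Finset.prod_ne_zero_iff.mpr fun l _ => zpow_ne_zero _ (hQ.2.2 _ _)

omit hQ

omit hRNF in
lemma RD_zero : RD hd z k 0 := fun l _ => by simp

omit hRNF in
omit hRNF in
lemma RD_add {m n : Fin d → ℤ} (hm : RD hd z k m) (hn : RD hd z k n) :
    RD hd z k (m + n) := fun l hl =>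
  ⟨dvd_add (hm l hl).1 (hn l hl).1, dvd_add (hm l hl).2 (hn l hl).2⟩

omit hRNF in
omit hRNF in
lemma RD_neg {m : Fin d → ℤ} (hm : RD hd z k m) : RD hd z k (-m) := fun l hl =>
  ⟨(hm l hl).1.neg_right, (hm l hl).2.neg_right⟩

omit hRNF in
omit hRNF in
lemma RD_zsmul {m : Fin d → ℤ} (hm : RD hd z k m) (j : ℤ) : RD hd z k (j • m) :=
  fun l hl => ⟨(hm l hl).1.mul_left j, (hm l hl).2.mul_left j⟩

lemma memR_zero : (0 : Fin d → ℤ) ∈ Rset d Q :=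
  memR_of_RD hd hRNF (RD_zero hd)

lemma memR_add {m n : Fin d → ℤ} (hm : m ∈ Rset d Q) (hn : n ∈ Rset d Q) :
    m + n ∈ Rset d Q :=
  memR_of_RD hd hRNF (RD_add hd (RD_of_memR hd hRNF hm) (RD_of_memR hd hRNF hn))

lemma memR_neg {m : Fin d → ℤ} (hm : m ∈ Rset d Q) : -m ∈ Rset d Q :=
  memR_of_RD hd hRNF (RD_neg hd (RD_of_memR hd hRNF hm))

lemma memR_zsmul {m : Fin d → ℤ} (hm : m ∈ Rset d Q) (j : ℤ) : j • m ∈ Rset d Q :=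
  memR_of_RD hd hRNF (RD_zsmul hd (RD_of_memR hd hRNF hm) j)

lemma notR_add_memR {r n : Fin d → ℤ} (hr : r ∉ Rset d Q) (hn : n ∈ Rset d Q) :
    r + n ∉ Rset d Q := by
  intro h
  apply hr
  have := memR_add hd hRNF h (memR_neg hd hRNF hn)
  simpa using this

lemma sigma_one_of_memR_left {m : Fin d → ℤ} (hm : m ∈ Rset d Q) (n : Fin d → ℤ) :
    qsigma d Q m n = 1 :=
  qsigma_one_left hd hRNF (RD_of_memR hd hRNF hm) n

lemma sigma_one_of_memR_right {m : Fin d → ℤ} (hm : m ∈ Rset d Q) (n : Fin d → ℤ) :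
    qsigma d Q n m = 1 :=
  qsigma_one_right hd hRNF (RD_of_memR hd hRNF hm) n

/-! ### sc computations -/

lemma sc_RR (γ : Fin d → ℂ) {m n : Fin d → ℤ} (hm : m ∈ Rset d Q) (hn : n ∈ Rset d Q) :
    sc d Q γ m n = ip d γ n - ip d γ m := by
  rw [sc, if_pos hm, if_pos hn, sigma_one_of_memR_left hd hRNF hm, one_mul, ip_sub]

lemma sc_RN (γ : Fin d → ℂ) {m n : Fin d → ℤ} (hm : m ∈ Rset d Q) (hn : n ∉ Rset d Q) :
    sc d Q γ m n = ip d γ n := by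
  rw [sc, if_pos hm, if_neg hn, sigma_one_of_memR_left hd hRNF hm, one_mul]

lemma sc_NR (γ : Fin d → ℂ) {m n : Fin d → ℤ} (hm : m ∉ Rset d Q) (hn : n ∈ Rset d Q) :
    sc d Q γ m n = -ip d γ m := by
  rw [sc, if_neg hm, if_pos hn, sigma_one_of_memR_left hd hRNF hn, one_mul]

omit hRNF in
lemma sc_NN (γ : Fin d → ℂ) {m n : Fin d → ℤ} (hm : m ∉ Rset d Q) (hn : n ∉ Rset d Q) :
    sc d Q γ m n = qsigma d Q m n - qsigma d Q n m := by
  rw [sc, if_neg hm, if_neg hn]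

lemma sc_zero_left (γ : Fin d → ℂ) (m : Fin d → ℤ) : sc d Q γ 0 m = ip d γ m := by
  by_cases hm : m ∈ Rset d Q
  · rw [sc_RR hd hRNF γ (memR_zero hd hRNF) hm, ip_zero, sub_zero]
  · rw [sc_RN hd hRNF γ (memR_zero hd hRNF) hm]

lemma sc_zero_right (γ : Fin d → ℂ) (m : Fin d → ℤ) : sc d Q γ m 0 = -ip d γ m := by
  by_cases hm : m ∈ Rset d Q
  · rw [sc_RR hd hRNF γ hm (memR_zero hd hRNF), ip_zero, zero_sub]
  · rw [sc_NR hd hRNF γ hm (memR_zero hd hRNF)]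

lemma sc_diag_R (γ : Fin d → ℂ) {m : Fin d → ℤ} (hm : m ∈ Rset d Q) :
    sc d Q γ m (-m) = -(2 * ip d γ m) := by
  rw [sc_RR hd hRNF γ hm (memR_neg hd hRNF hm), ip_neg]; ring

include hQ

lemma sc_diag_N (γ : Fin d → ℂ) {m : Fin d → ℤ} (hm : m ∉ Rset d Q) :
    sc d Q γ m (-m) = 0 := by
  have hmn : -m ∉ Rset d Q := by
    intro h; apply hm; simpa using memR_neg hd hRNF h
  rw [sc_NN hd γ hm hmn, qsigma_neg_right hd hRNF hQ, qsigma_neg_left hd hRNF hQ,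
    sub_self]

omit hQ

/-! ### facts about e = k1e1 and basis vectors -/

omit hRNF in
lemma ip_single (γ : Fin d → ℂ) (i : Fin d) (c : ℤ) :
    ip d γ (Pi.single i c) = γ i * c := by
  unfold ip
  rw [Finset.sum_eq_single i]
  · simp
  · intro j _ hj
    rw [Pi.single_eq_of_ne hj]
    simp
  · simp

lemma Aidx_zero : Aidx hd 0 = ⟨0, hd⟩ := by
  apply Fin.ext
  rw [Aidx_val hd hRNF hRNF.1]

lemma k1_pos : 1 < k (⟨0, hd⟩ : Fin d) := by
  have h0 : (0:ℕ) < z := hRNF.1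
  have hi : 2 * 0 < d := by simpa using hd
  have hj : 2 * 0 + 1 < d := lt_d_of_lt_z hd hRNF h0
  have h := (hRNF.2.2.2.1 0 h0 hi hj).2.2.2
  have h00 : (⟨2 * 0, hi⟩ : Fin d) = ⟨0, hd⟩ := by apply Fin.ext; simp
  rwa [h00] at h

omit hRNF in
lemma k1e1_def : k1e1 d k hd = Pi.single (⟨0, hd⟩ : Fin d) (k ⟨0, hd⟩ : ℤ) := rfl

lemma k1e1_ne_zero : k1e1 d k hd ≠ 0 := by
  intro h
  have := congrFun h ⟨0, hd⟩
  rw [k1e1_def, Pi.single_eq_same] at this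
  have hk := k1_pos hd hRNF
  simp only [Pi.zero_apply] at this
  omega

lemma RD_k1e1 : RD hd z k (k1e1 d k hd) := by
  intro l hl
  by_cases h0 : l = 0
  · subst h0
    constructor
    · rw [k1e1_def, ← Aidx_zero hd hRNF, Pi.single_eq_same, Aidx_zero hd hRNF]
    · rw [k1e1_def, Pi.single_eq_of_ne]
      · exact dvd_zero _
      · rw [← Aidx_zero hd hRNF]
        exact Ne.symm (Aidx_ne_Bidx hd hRNF hRNF.1 hl)
  · constructor
    · rw [k1e1_def, Pi.single_eq_of_ne]
      · exact dvd_zero _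
      · rw [← Aidx_zero hd hRNF]
        intro h
        exact h0 (Aidx_inj hd hRNF hl hRNF.1 h)
    · rw [k1e1_def, Pi.single_eq_of_ne]
      · exact dvd_zero _
      · rw [← Aidx_zero hd hRNF]
        exact Ne.symm (Aidx_ne_Bidx hd hRNF hRNF.1 hl)

lemma memR_k1e1 : k1e1 d k hd ∈ Rset d Q :=
  memR_of_RD hd hRNF (RD_k1e1 hd hRNF)

lemma ip_k1e1_ne_zero {γ : Fin d → ℂ} (hγ : Generic d γ) :
    ip d γ (k1e1 d k hd) ≠ 0 :=
  generic_ne hγ (k1e1_ne_zero hd hRNF)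

/-! ### solving the Virasoro functional equation on R -/

lemma vir_vanish {γ : Fin d → ℂ} (hγ : Generic d γ) (φ : (Fin d → ℤ) → ℂ)
    (hodd : ∀ m, φ (-m) = -φ m)
    (hV : ∀ m n : Fin d → ℤ, m ∈ Rset d Q → n ∈ Rset d Q →
      ip d γ (n - m) * φ (m + n) - ip d γ (m + m + n) * φ n
        + ip d γ (m + n + n) * φ m = 0)
    (hφe : φ (k1e1 d k hd) = 0)
    (hφ2e : φ ((2:ℤ) • k1e1 d k hd) = 0) :
    ∀ m ∈ Rset d Q, φ m = 0 := by
  classical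
  set e : Fin d → ℤ := k1e1 d k hd with he
  have heR : e ∈ Rset d Q := memR_k1e1 hd hRNF
  set Ge : ℂ := ip d γ e with hGe0
  have hGe : Ge ≠ 0 := ip_k1e1_ne_zero hd hRNF hγ
  have hφ0 : φ 0 = 0 := by
    have h := hodd 0
    rw [neg_zero] at h
    linear_combination h / 2
  have hrec : ∀ m, m ∈ Rset d Q →
      ip d γ (e - m) * φ (m + e) + ip d γ (m + e + e) * φ m = 0 := by
    intro m hm
    have h := hV m e hm heR
    rw [hφe] at h
    linear_combination h
  have hnat : ∀ n : ℕ, φ ((n:ℤ) • e) = 0 := by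
    intro n
    induction n using Nat.strong_induction_on with
    | _ n ih =>
      match n with
      | 0 => simpa using hφ0
      | 1 => simpa using hφe
      | 2 =>
        have h2 : ((2:ℕ):ℤ) = (2:ℤ) := by norm_num
        rw [h2]; exact hφ2e
      | (n+3) =>
        have ihn : φ (((n+2 : ℕ):ℤ) • e) = 0 := ih (n+2) (by omega)
        have hm : ((n+2 : ℕ):ℤ) • e ∈ Rset d Q := memR_zsmul hd hRNF heR _
        have h := hrec _ hm
        rw [ihn, mul_zero, add_zero] at h
        have hv : ((n+2 : ℕ):ℤ) • e + e = ((n+3 : ℕ):ℤ) • e := by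
          push_cast [add_smul, one_smul]
          abel
        rw [hv] at h
        have hnz : ip d γ (e - ((n+2 : ℕ):ℤ) • e) ≠ 0 := by
          rw [ip_sub, ip_zsmul]
          intro hc
          have h1 : ip d γ (((n+1 : ℕ):ℤ) • e) = 0 := by
            rw [ip_zsmul]
            push_cast
            push_cast at hc
            linear_combination -hc
          refine generic_ne hγ ?_ h1
          intro h0
          rw [he] at h0
          have h2 := congrFun h0 ⟨0, hd⟩
          simp only [Pi.smul_apply, smul_eq_mul, Pi.zero_apply, k1e1_def,
            Pi.single_eq_same] at h2
          have hk := k1_pos hd hRNF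
          have hpos : (0:ℤ) < ((n+1 : ℕ):ℤ) * (k (⟨0, hd⟩ : Fin d) : ℤ) := by
            apply mul_pos
            · exact_mod_cast Nat.succ_pos (n)
            · exact_mod_cast Nat.lt_of_lt_of_le Nat.zero_lt_one hk.le
          exact hpos.ne' h2
        rcases mul_eq_zero.mp h with h' | h'
        · exact absurd h' hnz
        · exact h'
  have hline0 : ∀ j : ℤ, φ (j • e) = 0 := by
    intro j
    rcases Int.eq_nat_or_neg j with ⟨n, rfl | rfl⟩
    · exact hnat n
    · rw [neg_smul, hodd, hnat n, neg_zero]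
  -- the line formula, for every m not on the line ℤe
  have hlineAll : ∀ m, m ∈ Rset d Q → (∀ j : ℤ, m ≠ j • e) → ∀ j : ℤ,
      φ (m + j • e) * ((ip d γ m / Ge)^3 - ip d γ m / Ge)
        = φ m * ((ip d γ m / Ge + (j:ℂ))^3 - (ip d γ m / Ge + (j:ℂ))) := by
    intro m hm hex
    have hnz : ∀ j : ℤ, ip d γ m + (j:ℂ) * Ge ≠ 0 := by
      intro j hc
      refine generic_ne hγ (show m + j • e ≠ 0 from ?_) ?_
      · intro h0
        apply hex (-j)
        have h1 : m = m + j • e + (-j) • e := by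
          rw [neg_smul]; abel
        rw [h1, h0, zero_add]
      · rw [ip_add, ip_zsmul, ← hGe0]
        exact hc
    set x : ℂ := ip d γ m / Ge with hx
    have hxa : x * Ge = ip d γ m := div_mul_cancel₀ _ hGe
    intro j
    induction j using Int.induction_on with
    | zero => norm_num
    | succ i ihp =>
      have hm' : m + (i:ℤ) • e ∈ Rset d Q :=
        memR_add hd hRNF hm (memR_zsmul hd hRNF heR _)
      have hr := hrec _ hm'
      have hv : m + (i:ℤ) • e + e = m + ((i:ℤ)+1) • e := by
        rw [add_smul, one_smul]; abel
      rw [hv] at hr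
      rw [ip_sub, ip_add, ip_zsmul, ip_add, ip_add, ip_zsmul, ← hGe0] at hr
      push_cast at hr
      have hc : Ge - (ip d γ m + (i:ℂ) * Ge) ≠ 0 := by
        intro h
        apply hnz ((i:ℤ) - 1)
        push_cast
        linear_combination -h
      push_cast
      push_cast at ihp
      apply mul_left_cancel₀ hc
      linear_combination (x^3 - x) * hr
        - (ip d γ m + (i:ℂ)*Ge + Ge + Ge) * ihp
        - (φ m * (((x + (i:ℂ) + 1)^3 - (x + (i:ℂ) + 1))
            - ((x + (i:ℂ))^3 - (x + (i:ℂ))))) * hxa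
    | pred i ihn =>
      have hm' : m + (-(i:ℤ)-1) • e ∈ Rset d Q :=
        memR_add hd hRNF hm (memR_zsmul hd hRNF heR _)
      have hr := hrec _ hm'
      have hv : m + (-(i:ℤ)-1) • e + e = m + (-(i:ℤ)) • e := by
        rw [show (-(i:ℤ)-1 : ℤ) = -(i:ℤ) - 1 by ring, sub_smul, one_smul]; abel
      rw [hv] at hr
      rw [ip_sub, ip_add, ip_zsmul, ip_add, ip_add, ip_zsmul, ← hGe0] at hr
      push_cast at hr
      have hD : ip d γ m + (-(i:ℂ)-1) * Ge + Ge + Ge ≠ 0 := by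
        intro h
        apply hnz (1 - (i:ℤ))
        push_cast
        linear_combination h
      push_cast
      push_cast at ihn
      apply mul_left_cancel₀ hD
      linear_combination (x^3 - x) * hr
        - (Ge - (ip d γ m + (-(i:ℂ)-1) * Ge)) * ihn
        - (φ m * (((x - (i:ℂ))^3 - (x - (i:ℂ)))
            - ((x - (i:ℂ) - 1)^3 - (x - (i:ℂ) - 1)))) * hxa
  -- main argument
  intro m hm
  by_cases hex : ∃ j : ℤ, m = j • e
  · obtain ⟨j, rfl⟩ := hex
    exact hline0 j
  push_neg at hex
  set x : ℂ := ip d γ m / Ge with hx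
  have hxa : x * Ge = ip d γ m := div_mul_cancel₀ _ hGe
  have hmm : -m ∈ Rset d Q := memR_neg hd hRNF hm
  have hexm : ∀ j : ℤ, -m ≠ j • e := by
    intro j hc
    apply hex (-j)
    rw [neg_smul, ← hc, neg_neg]
  have hnR : (2:ℤ) • e - m ∈ Rset d Q := by
    rw [sub_eq_add_neg]
    exact memR_add hd hRNF (memR_zsmul hd hRNF heR 2) hmm
  have hA' := hV m ((2:ℤ) • e - m) hm hnR
  have hv1 : m + ((2:ℤ) • e - m) = (2:ℤ) • e := by abel
  have hv2 : m + m + ((2:ℤ) • e - m) = m + (2:ℤ) • e := by abel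
  have hv3 : (2:ℤ) • e + ((2:ℤ) • e - m) = (4:ℤ) • e - m := by
    have h24 : (2:ℤ) • e + (2:ℤ) • e = (4:ℤ) • e := by
      rw [← add_smul]; norm_num
    rw [← h24]; abel
  rw [hv1, hv2, hv3, hφ2e, mul_zero, zero_sub] at hA'
  rw [ip_add, ip_zsmul, ip_sub, ip_zsmul, ← hGe0] at hA'
  push_cast at hA'
  have hlm2 := hlineAll (-m) hmm hexm 2
  rw [ip_neg, neg_div, ← hx, hodd] at hlm2
  have hv4 : -m + (2:ℤ) • e = (2:ℤ) • e - m := by abel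
  rw [hv4] at hlm2
  push_cast at hlm2
  have h0 : φ m * (Ge * (12 - 12*x)) = 0 := by
    linear_combination (x - x^3) * hA'
      + (ip d γ m + 2*Ge) * hlm2
      + (φ m * (((2-x)^3 - (2-x)) - (x - x^3))) * hxa
  have h12 : Ge * (12 - 12*x) ≠ 0 := by
    refine mul_ne_zero hGe ?_
    intro h
    have hx1 : x = 1 := by linear_combination -h/12
    have : ip d γ (m - e) ≠ 0 := by
      refine generic_ne hγ ?_
      intro h0
      apply hex 1
      have h1 : m = m - e + e := by abel
      rw [h1, h0, zero_add, one_smul]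
    apply this
    rw [ip_sub, ← hGe0, ← hxa, hx1, one_mul, sub_self]
  rcases mul_eq_zero.mp h0 with h' | h'
  · exact h'
  · exact absurd h' h12

lemma vir_solve {γ : Fin d → ℂ} (hγ : Generic d γ) (φ : (Fin d → ℤ) → ℂ)
    (hodd : ∀ m, φ (-m) = -φ m)
    (hV : ∀ m n : Fin d → ℤ, m ∈ Rset d Q → n ∈ Rset d Q →
      ip d γ (n - m) * φ (m + n) - ip d γ (m + m + n) * φ n
        + ip d γ (m + n + n) * φ m = 0) :
    ∃ A B : ℂ, ∀ m ∈ Rset d Q,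
      φ m = A * (ip d γ m / ip d γ (k1e1 d k hd))^3
        + B * (ip d γ m / ip d γ (k1e1 d k hd)) := by
  classical
  set e : Fin d → ℤ := k1e1 d k hd with he
  set Ge : ℂ := ip d γ e with hGe0
  have hGe : Ge ≠ 0 := ip_k1e1_ne_zero hd hRNF hγ
  set A : ℂ := (φ ((2:ℤ) • e) - 2 * φ e) / 6 with hA
  set B : ℂ := φ e - A with hB
  set P : (Fin d → ℤ) → ℂ :=
    fun m => A * (ip d γ m / Ge)^3 + B * (ip d γ m / Ge) with hP
  have hPe : P e = φ e := by
    simp only [hP]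
    rw [← hGe0, div_self hGe]
    linear_combination hB
  have hip2e : ip d γ ((2:ℤ) • e) / Ge = 2 := by
    rw [ip_zsmul, ← hGe0]
    push_cast
    rw [mul_div_assoc, div_self hGe, mul_one]
  have hP2e : P ((2:ℤ) • e) = φ ((2:ℤ) • e) := by
    simp only [hP]
    rw [hip2e]
    linear_combination (-6 : ℂ) * hA - 2 * hB
  have key := vir_vanish hd hRNF hγ (fun m => φ m - P m)
    (by
      intro m
      rw [hodd]
      simp only [hP, ip_neg, neg_div]
      ring)
    (by
      intro m n hm hn
      have h1 := hV m n hm hn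
      have h2 : ip d γ (n - m) * P (m + n) - ip d γ (m + m + n) * P n
          + ip d γ (m + n + n) * P m = 0 := by
        simp only [hP, ip_sub, ip_add]
        field_simp
        ring
      linear_combination h1 - h2)
    (by rw [← he, hPe, sub_self])
    (by rw [← he, hP2e, sub_self])
  refine ⟨A, B, fun m hm => ?_⟩
  have h := key m hm
  simp only [hP] at h
  linear_combination h

/-! ### the off-R part -/

omit hd hRNF in
lemma single_one_ne_zero (i : Fin d) : (Pi.single i 1 : Fin d → ℤ) ≠ 0 := by
  intro h
  have := congrFun h i
  rw [Pi.single_eq_same] at this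
  simp at this

lemma k_Aidx_pos {l : ℕ} (hl : l < z) : 1 < k (Aidx hd l) := by
  have hi : 2 * l < d := by have := lt_d_of_lt_z hd hRNF hl; omega
  have hj : 2 * l + 1 < d := lt_d_of_lt_z hd hRNF hl
  have := (hRNF.2.2.2.1 l hl hi hj).2.2.2
  rwa [← Aidx_eq hd hRNF hl hi] at this

include hQ

lemma offR_form {γ : Fin d → ℂ} (hγ : Generic d γ) (φ : (Fin d → ℤ) → ℂ)
    (hodd : ∀ m, φ (-m) = -φ m)
    (hC : ∀ m n : Fin d → ℤ, sc d Q γ m n * φ (m + n)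
      + sc d Q γ (-(m+n)) m * φ (-n) + sc d Q γ n (-(m+n)) * φ (-m) = 0) :
    ∃ C : ℂ, ∀ r, r ∉ Rset d Q → φ r = C * qsigma d Q r (-r) * ip d γ r := by
  classical
  set g : (Fin d → ℤ) → ℂ := fun r => qsigma d Q r r * φ r with hg
  have hipne : ∀ r, r ∉ Rset d Q → ip d γ r ≠ 0 := by
    intro r hr
    refine generic_ne hγ ?_
    intro h0
    rw [h0] at hr
    exact hr (memR_zero hd hRNF)
  -- invariance along R
  have hg1 : ∀ r, r ∉ Rset d Q → ∀ n, n ∈ Rset d Q →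
      ip d γ r * g (r + n) = ip d γ (r + n) * g r := by
    intro r hr n hn
    have hrnN : r + n ∉ Rset d Q := notR_add_memR hd hRNF hr hn
    have hneg : -(r + n) ∉ Rset d Q := by
      intro h
      exact hrnN (by simpa using memR_neg hd hRNF h)
    have h := hC r n
    rw [sc_NR hd hRNF γ hr hn] at h
    have hmid : sc d Q γ (-(r+n)) r = 0 := by
      rw [sc_NN hd γ hneg hr, qsigma_neg_left hd hRNF hQ, qsigma_neg_right hd hRNF hQ,
        qsigma_add_left hd hRNF hQ, qsigma_add_right hd hRNF hQ,
        sigma_one_of_memR_left hd hRNF hn, sigma_one_of_memR_right hd hRNF hn]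
      simp
    rw [hmid, zero_mul, add_zero, sc_RN hd hRNF γ hn hneg, ip_neg, hodd] at h
    have hσ : qsigma d Q (r + n) (r + n) = qsigma d Q r r := by
      rw [qsigma_add_left hd hRNF hQ, qsigma_add_right hd hRNF hQ,
        qsigma_add_right hd hRNF hQ, sigma_one_of_memR_left hd hRNF hn,
        sigma_one_of_memR_right hd hRNF hn, sigma_one_of_memR_left hd hRNF hn,
        mul_one, mul_one, mul_one]
    simp only [hg]
    rw [hσ]
    linear_combination -(qsigma d Q r r) * h
  -- additivity across non-commuting pairs
  have hg2 : ∀ r s, qsigma d Q r s ≠ qsigma d Q s r → g (r + s) = g r + g s := by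
    intro r s hrs
    have hrN : r ∉ Rset d Q := fun h => hrs (by
      rw [sigma_one_of_memR_left hd hRNF h, sigma_one_of_memR_right hd hRNF h])
    have hsN : s ∉ Rset d Q := fun h => hrs (by
      rw [sigma_one_of_memR_right hd hRNF h, sigma_one_of_memR_left hd hRNF h])
    have hrsN : r + s ∉ Rset d Q := by
      intro h
      apply hrs
      have h1 : qsigma d Q r s = (qsigma d Q r r)⁻¹ := by
        have hv : s = -r + (r + s) := by abel
        rw [hv, qsigma_add_right hd hRNF hQ, qsigma_neg_right hd hRNF hQ,
          sigma_one_of_memR_right hd hRNF h, mul_one]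
      have h2 : qsigma d Q s r = (qsigma d Q r r)⁻¹ := by
        have hv : s = -r + (r + s) := by abel
        rw [hv, qsigma_add_left hd hRNF hQ, qsigma_neg_left hd hRNF hQ,
          sigma_one_of_memR_left hd hRNF h, mul_one]
      rw [h1, h2]
    have hnegN : -(r + s) ∉ Rset d Q := by
      intro h
      exact hrsN (by simpa using memR_neg hd hRNF h)
    have h := hC r s
    rw [sc_NN hd γ hrN hsN, sc_NN hd γ hnegN hrN, sc_NN hd γ hsN hnegN,
      hodd, hodd] at h
    set a : ℂ := qsigma d Q r s with ha0
    set b : ℂ := qsigma d Q s r with hb0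
    set σr : ℂ := qsigma d Q r r with hσr0
    set σs : ℂ := qsigma d Q s s with hσs0
    have hane : a ≠ 0 := qsigma_ne_zero hd hRNF hQ r s
    have hbne : b ≠ 0 := qsigma_ne_zero hd hRNF hQ s r
    have hσrne : σr ≠ 0 := qsigma_ne_zero hd hRNF hQ r r
    have hσsne : σs ≠ 0 := qsigma_ne_zero hd hRNF hQ s s
    have hP1 : qsigma d Q (-(r+s)) r * (σr * b) = 1 := by
      rw [qsigma_neg_left hd hRNF hQ, qsigma_add_left hd hRNF hQ]
      exact inv_mul_cancel₀ (by exact mul_ne_zero hσrne hbne)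
    have hP2 : qsigma d Q r (-(r+s)) * (σr * a) = 1 := by
      rw [qsigma_neg_right hd hRNF hQ, qsigma_add_right hd hRNF hQ]
      exact inv_mul_cancel₀ (by exact mul_ne_zero hσrne hane)
    have hS1 : qsigma d Q s (-(r+s)) * (b * σs) = 1 := by
      rw [qsigma_neg_right hd hRNF hQ, qsigma_add_right hd hRNF hQ]
      exact inv_mul_cancel₀ (by exact mul_ne_zero hbne hσsne)
    have hS2 : qsigma d Q (-(r+s)) s * (a * σs) = 1 := by
      rw [qsigma_neg_left hd hRNF hQ, qsigma_add_left hd hRNF hQ]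
      exact inv_mul_cancel₀ (by exact mul_ne_zero hane hσsne)
    have hab : a - b ≠ 0 := sub_ne_zero.mpr hrs
    have key : (a - b) * (a * b * σr * σs * φ (r + s) - σs * φ s - σr * φ r) = 0 := by
      linear_combination (a*b*σr*σs) * h
        + (a * σs * φ s) * hP1 - (b * σs * φ s) * hP2
        + (a * σr * φ r) * hS1 - (b * σr * φ r) * hS2
    have hEq := (mul_eq_zero.mp key).resolve_left hab
    simp only [hg]
    rw [qsigma_add_left hd hRNF hQ, qsigma_add_right hd hRNF hQ,
      qsigma_add_right hd hRNF hQ, ← ha0, ← hb0, ← hσr0, ← hσs0]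
    linear_combination hEq
  -- from additivity to proportionality
  have hkey : ∀ r s, qsigma d Q r s ≠ qsigma d Q s r →
      g r / ip d γ r = g s / ip d γ s := by
    intro r s hrs
    have hrN : r ∉ Rset d Q := fun h => hrs (by
      rw [sigma_one_of_memR_left hd hRNF h, sigma_one_of_memR_right hd hRNF h])
    have hsN : s ∉ Rset d Q := fun h => hrs (by
      rw [sigma_one_of_memR_right hd hRNF h, sigma_one_of_memR_left hd hRNF h])
    have hrsN : r + s ∉ Rset d Q := by
      intro h
      apply hrs
      have h1 : qsigma d Q r s = (qsigma d Q r r)⁻¹ := by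
        have hv : s = -r + (r + s) := by abel
        rw [hv, qsigma_add_right hd hRNF hQ, qsigma_neg_right hd hRNF hQ,
          sigma_one_of_memR_right hd hRNF h, mul_one]
      have h2 : qsigma d Q s r = (qsigma d Q r r)⁻¹ := by
        have hv : s = -r + (r + s) := by abel
        rw [hv, qsigma_add_left hd hRNF hQ, qsigma_neg_left hd hRNF hQ,
          sigma_one_of_memR_left hd hRNF h, mul_one]
      rw [h1, h2]
    set e : Fin d → ℤ := k1e1 d k hd with he
    have heR : e ∈ Rset d Q := memR_k1e1 hd hRNF
    have hreN : r + e ∉ Rset d Q := notR_add_memR hd hRNF hrN heR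
    have hrs2 : qsigma d Q (r + e) s ≠ qsigma d Q s (r + e) := by
      rw [qsigma_add_left hd hRNF hQ, qsigma_add_right hd hRNF hQ,
        sigma_one_of_memR_left hd hRNF heR, sigma_one_of_memR_right hd hRNF heR,
        mul_one, mul_one]
      exact hrs
    have h1 := hg2 r s hrs
    have h2 := hg2 (r + e) s hrs2
    have h3 := hg1 r hrN e heR
    have h4 := hg1 (r + s) hrsN e heR
    have hva : r + e + s = r + s + e := by abel
    rw [hva] at h2
    rw [ip_add] at h3 h4
    rw [ip_add, ip_add] at h4
    have hGr : ip d γ r ≠ 0 := hipne r hrN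
    have hGs : ip d γ s ≠ 0 := hipne s hsN
    have hGe : ip d γ e ≠ 0 := ip_k1e1_ne_zero hd hRNF hγ
    rw [div_eq_div_iff hGr hGs]
    have hmain : ip d γ e * (ip d γ s * g r - ip d γ r * g s) = 0 := by
      linear_combination (ip d γ r) * h4
        - (ip d γ r * (ip d γ r + ip d γ s)) * h2
        + (ip d γ r * (ip d γ r + ip d γ s + ip d γ e)) * h1
        - (ip d γ r + ip d γ s) * h3
    have := (mul_eq_zero.mp hmain).resolve_left hGe
    linear_combination this
  -- connectivity through basis vectors
  have hz0 : (0:ℕ) < z := hRNF.1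
  have hqBne : ∀ l, l < z → ∀ t : ℤ, ¬ ((k (Aidx hd l) : ℤ) ∣ t) →
      Q (Bidx hd l) (Aidx hd l) ^ t ≠ 1 := by
    intro l hl t hndvd h
    exact hndvd ((qB_zpow_eq_one_iff hd hRNF hl t).mp h)
  have hone : ∀ l, l < z → ¬ ((k (Aidx hd l) : ℤ) ∣ 1) := by
    intro l hl hdvd
    have h1 := Int.le_of_dvd one_pos hdvd
    have h2 := k_Aidx_pos hd hRNF hl
    omega
  have hBA : ∀ l, l < z →
      g (Pi.single (Bidx hd l) 1) / ip d γ (Pi.single (Bidx hd l) 1)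
        = g (Pi.single (Aidx hd l) 1) / ip d γ (Pi.single (Aidx hd l) 1) := by
    intro l hl
    refine hkey _ _ ?_
    rw [qsigma_single_B_left hd hRNF hl, qsigma_single_B_right hd hRNF hl,
      Pi.single_eq_same, one_mul]
    exact hqBne l hl 1 (hone l hl)
  have hA0 : ∀ l, l < z →
      g (Pi.single (Aidx hd l) 1) / ip d γ (Pi.single (Aidx hd l) 1)
        = g (Pi.single (Aidx hd 0) 1) / ip d γ (Pi.single (Aidx hd 0) 1) := by
    intro l hl
    by_cases h0 : l = 0
    · subst h0; rfl
    · set t : Fin d → ℤ := Pi.single (Bidx hd 0) 1 + Pi.single (Bidx hd l) 1 with ht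
      have hne0l : Aidx hd 0 ≠ Aidx hd l := by
        intro h
        exact h0 (Aidx_inj hd hRNF hz0 hl h).symm
      have hstep1 : g (Pi.single (Aidx hd l) 1) / ip d γ (Pi.single (Aidx hd l) 1)
          = g t / ip d γ t := by
        refine hkey _ _ ?_
        rw [qsigma_single_A_left hd hRNF hl, ht, qsigma_add_left hd hRNF hQ,
          qsigma_single_B_left hd hRNF hz0, qsigma_single_B_left hd hRNF hl]
        simp only [Pi.single_eq_same, Pi.single_eq_of_ne hne0l, mul_zero, zero_mul,
          zpow_zero, one_mul, mul_one, zpow_one]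
        exact Ne.symm (by rw [← zpow_one (Q (Bidx hd l) (Aidx hd l))]; exact hqBne l hl 1 (hone l hl))
      have hstep2 : g (Pi.single (Aidx hd 0) 1) / ip d γ (Pi.single (Aidx hd 0) 1)
          = g t / ip d γ t := by
        refine hkey _ _ ?_
        rw [qsigma_single_A_left hd hRNF hz0, ht, qsigma_add_left hd hRNF hQ,
          qsigma_single_B_left hd hRNF hz0, qsigma_single_B_left hd hRNF hl]
        simp only [Pi.single_eq_same, Pi.single_eq_of_ne (Ne.symm hne0l), mul_zero,
          zero_mul, zpow_zero, one_mul, mul_one, zpow_one]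
        exact Ne.symm (by rw [← zpow_one (Q (Bidx hd 0) (Aidx hd 0))]; exact hqBne 0 hz0 1 (hone 0 hz0))
      rw [hstep1, hstep2]
  set C : ℂ := g (Pi.single (Aidx hd 0) 1) / ip d γ (Pi.single (Aidx hd 0) 1) with hC0
  refine ⟨C, fun r hr => ?_⟩
  -- find a witness pair for r
  have hnRD : ¬ RD hd z k r := fun h => hr (memR_of_RD hd hRNF h)
  have hex : ∃ l, l < z ∧
      (¬ ((k (Aidx hd l) : ℤ) ∣ r (Aidx hd l)) ∨ ¬ ((k (Aidx hd l) : ℤ) ∣ r (Bidx hd l))) := by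
    by_contra hcon
    push_neg at hcon
    exact hnRD fun l hl => (hcon l hl)
  obtain ⟨l, hl, hcase⟩ := hex
  have hψr : g r / ip d γ r = C := by
    rcases hcase with hA | hB
    · have h1 : g r / ip d γ r
          = g (Pi.single (Bidx hd l) 1) / ip d γ (Pi.single (Bidx hd l) 1) := by
        refine hkey _ _ ?_
        rw [qsigma_single_B_right hd hRNF hl, qsigma_single_B_left hd hRNF hl, one_mul]
        exact Ne.symm (hqBne l hl _ hA)
      rw [h1, hBA l hl, hA0 l hl, hC0]
    · have h1 : g r / ip d γ r
          = g (Pi.single (Aidx hd l) 1) / ip d γ (Pi.single (Aidx hd l) 1) := by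
        refine hkey _ _ ?_
        rw [qsigma_single_A_right hd hRNF hl, qsigma_single_A_left hd hRNF hl, mul_one]
        exact hqBne l hl _ hB
      rw [h1, hA0 l hl, hC0]
  have hipr : ip d γ r ≠ 0 := hipne r hr
  have hgr : C * ip d γ r = qsigma d Q r r * φ r := by
    have h2 := div_mul_cancel₀ (g r) hipr
    rw [hψr] at h2
    simp only [hg] at h2
    exact h2
  have hσne : qsigma d Q r r ≠ 0 := qsigma_ne_zero hd hRNF hQ r r
  have hinv : qsigma d Q r r * (qsigma d Q r r)⁻¹ = 1 := mul_inv_cancel₀ hσne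
  apply mul_left_cancel₀ hσne
  rw [qsigma_neg_right hd hRNF hQ]
  linear_combination (-1 : ℂ) * hgr - (C * ip d γ r) * hinv

end RNF

/-! ### Finsupp bilinearity machinery -/

section Bilin

variable {Q : Matrix (Fin d) (Fin d) ℂ} {γ : Fin d → ℂ}

lemma pair_single (c : (Fin d → ℤ) → (Fin d → ℤ) → ℂ) (m n : Fin d → ℤ) (a b : ℂ) :
    ((Finsupp.single m a : g d).sum fun m' a' =>
      (Finsupp.single n b : g d).sum fun n' b' => a' * b' * c m' n')
      = a * b * c m n := by
  rw [Finsupp.sum_single_index (by simp [Finsupp.sum])]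
  rw [Finsupp.sum_single_index (by simp)]

lemma pair_add_left (c : (Fin d → ℤ) → (Fin d → ℤ) → ℂ) (x x' y : g d) :
    ((x + x').sum fun m a => y.sum fun n b => a * b * c m n)
      = (x.sum fun m a => y.sum fun n b => a * b * c m n)
        + (x'.sum fun m a => y.sum fun n b => a * b * c m n) := by
  apply Finsupp.sum_add_index'
  · intro m; simp [Finsupp.sum]
  · intro m a1 a2
    rw [← Finsupp.sum_add]
    congr 1; funext n b; ring

lemma pair_add_right (c : (Fin d → ℤ) → (Fin d → ℤ) → ℂ) (x y y' : g d) :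
    (x.sum fun m a => (y + y').sum fun n b => a * b * c m n)
      = (x.sum fun m a => y.sum fun n b => a * b * c m n)
        + (x.sum fun m a => y'.sum fun n b => a * b * c m n) := by
  rw [← Finsupp.sum_add]
  congr 1; funext m a
  apply Finsupp.sum_add_index'
  · intro n; simp
  · intro n b1 b2; ring

lemma pair_zero_left (c : (Fin d → ℤ) → (Fin d → ℤ) → ℂ) (y : g d) :
    ((0 : g d).sum fun m a => y.sum fun n b => a * b * c m n) = 0 :=
  Finsupp.sum_zero_index

lemma pair_zero_right (c : (Fin d → ℤ) → (Fin d → ℤ) → ℂ) (x : g d) :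
    (x.sum fun m a => (0 : g d).sum fun n b => a * b * c m n) = 0 := by
  simp [Finsupp.sum_zero_index]

lemma br_single (m n : Fin d → ℤ) (a b : ℂ) :
    br d Q γ (Finsupp.single m a) (Finsupp.single n b)
      = Finsupp.single (m + n) (a * b * sc d Q γ m n) := by
  unfold br
  rw [Finsupp.sum_single_index (by simp [Finsupp.sum])]
  rw [Finsupp.sum_single_index (by simp)]

lemma br_LL (m n : Fin d → ℤ) :
    br d Q γ (L d m) (L d n) = Finsupp.single (m + n) (sc d Q γ m n) := by
  rw [L, L, br_single, one_mul, one_mul]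

lemma br_add_left (x x' y : g d) :
    br d Q γ (x + x') y = br d Q γ x y + br d Q γ x' y := by
  apply Finsupp.sum_add_index'
  · intro m; simp [Finsupp.sum]
  · intro m a1 a2
    rw [← Finsupp.sum_add]
    congr 1; funext n b
    rw [← Finsupp.single_add]
    congr 1; ring

lemma br_add_right (x y y' : g d) :
    br d Q γ x (y + y') = br d Q γ x y + br d Q γ x y' := by
  unfold br
  rw [← Finsupp.sum_add]
  congr 1; funext m a
  apply Finsupp.sum_add_index'
  · intro n; simp
  · intro n b1 b2
    rw [← Finsupp.single_add]
    congr 1; ring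

lemma br_zero_left (y : g d) : br d Q γ 0 y = 0 :=
  Finsupp.sum_zero_index

lemma br_zero_right (x : g d) : br d Q γ x 0 = 0 := by
  unfold br
  simp [Finsupp.sum_zero_index]

end Bilin

end QTorus

/-- for Q in rational normal form and γ generic, every 2-cocycle α on
g(γ,Q) is cohomologous to a ℂ-linear combination of α₁ and α₂; moreover no nonzero
linear combination of α₁ and α₂ is a coboundary, so the universal central extension
of g has a two-dimensional center. -/
theorem stmt19 (d : ℕ) (hd1 : 1 < d) (hd : 0 < d)
    (Q : Matrix (Fin d) (Fin d) ℂ) (hQ : QOk d Q)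
    (z : ℕ) (k : Fin d → ℕ) (hRNF : IsRNF d Q z k)
    (γ : Fin d → ℂ) (hγ : Generic d γ) :
    (∀ α : g d →ₗ[ℂ] g d →ₗ[ℂ] ℂ, IsCocycle d Q γ α →
      ∃ (c₁ c₂ : ℂ) (f : g d →ₗ[ℂ] ℂ),
        ∀ x y : g d,
          α x y = c₁ * alpha1 d Q γ k hd x y + c₂ * alpha2 d Q γ k hd x y +
            f (br d Q γ x y)) ∧
    (∀ c₁ c₂ : ℂ,
      (∃ f : g d →ₗ[ℂ] ℂ, ∀ x y : g d,
        c₁ * alpha1 d Q γ k hd x y + c₂ * alpha2 d Q γ k hd x y =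
          f (br d Q γ x y)) →
      c₁ = 0 ∧ c₂ = 0) := by
  classical
  have hGe : ip d γ (k1e1 d k hd) ≠ 0 := ip_k1e1_ne_zero hd hRNF hγ
  have heR : k1e1 d k hd ∈ Rset d Q := memR_k1e1 hd hRNF
  constructor
  · intro α hα
    obtain ⟨hskew, hjac⟩ := hα
    have hsingle : ∀ (p : Fin d → ℤ) (c : ℂ) (y : g d),
        α (Finsupp.single p c) y = c * α (L d p) y := by
      intro p c y
      have h : Finsupp.single p c = c • (L d p) := by
        rw [L, Finsupp.smul_single, smul_eq_mul, mul_one]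
      rw [h, map_smul, LinearMap.smul_apply, smul_eq_mul]
    have hsingle2 : ∀ (x : g d) (p : Fin d → ℤ) (c : ℂ),
        α x (Finsupp.single p c) = c * α x (L d p) := by
      intro x p c
      have h : Finsupp.single p c = c • (L d p) := by
        rw [L, Finsupp.smul_single, smul_eq_mul, mul_one]
      rw [h, map_smul, smul_eq_mul]
    set φ : (Fin d → ℤ) → ℂ := fun m => α (L d m) (L d (-m)) with hφ
    have hφodd : ∀ m, φ (-m) = -φ m := by
      intro m
      simp only [hφ]
      rw [neg_neg]
      exact hskew _ _
    have hC : ∀ m n : Fin d → ℤ, sc d Q γ m n * φ (m+n)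
        + sc d Q γ (-(m+n)) m * φ (-n) + sc d Q γ n (-(m+n)) * φ (-m) = 0 := by
      intro m n
      have h := hjac (L d m) (L d n) (L d (-(m+n)))
      rw [br_LL, br_LL, br_LL, hsingle, hsingle, hsingle] at h
      have hv1 : -(m+n) + m = -n := by abel
      have hv2 : n + -(m+n) = -m := by abel
      rw [hv1, hv2] at h
      simp only [hφ]
      rw [neg_neg, neg_neg]
      linear_combination h
    have hdeg : ∀ m n : Fin d → ℤ, m + n ≠ 0 →
        ip d γ (m+n) * α (L d m) (L d n)
          = -(sc d Q γ m n * α (L d (m+n)) (L d 0)) := by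
      intro m n hmn
      have h := hjac (L d 0) (L d m) (L d n)
      rw [br_LL, br_LL, br_LL, hsingle, hsingle, hsingle] at h
      have hv1 : (0 : Fin d → ℤ) + m = m := by abel
      have hv2 : n + (0 : Fin d → ℤ) = n := by abel
      rw [hv1, hv2, sc_zero_left hd hRNF γ, sc_zero_right hd hRNF γ,
        hskew (L d n) (L d m)] at h
      rw [ip_add]
      linear_combination h
    have hV : ∀ m n : Fin d → ℤ, m ∈ Rset d Q → n ∈ Rset d Q →
        ip d γ (n - m) * φ (m + n) - ip d γ (m + m + n) * φ n
          + ip d γ (m + n + n) * φ m = 0 := by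
      intro m n hm hn
      have hmnR' : -(m+n) ∈ Rset d Q := memR_neg hd hRNF (memR_add hd hRNF hm hn)
      have h := hC m n
      rw [sc_RR hd hRNF γ hm hn, sc_RR hd hRNF γ hmnR' hm, sc_RR hd hRNF γ hn hmnR',
        hφodd, hφodd] at h
      simp only [ip_sub, ip_add, ip_neg] at h ⊢
      linear_combination h
    obtain ⟨A, B, hAB⟩ := vir_solve hd hRNF hγ φ hφodd hV
    obtain ⟨C, hC2⟩ := offR_form hd hRNF hQ hγ φ hφodd hC
    set F : (Fin d → ℤ) → ℂ := fun p =>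
      if p = 0 then -(A+B)/(2 * ip d γ (k1e1 d k hd))
      else -(α (L d p) (L d 0)) / ip d γ p with hF
    set f : g d →ₗ[ℂ] ℂ :=
      Finsupp.lsum ℂ (fun p => LinearMap.toSpanSingleton ℂ ℂ (F p)) with hf
    have hfs : ∀ (p : Fin d → ℤ) (c : ℂ), f (Finsupp.single p c) = c * F p := by
      intro p c
      rw [hf, Finsupp.lsum_single, LinearMap.toSpanSingleton_apply, smul_eq_mul]
    refine ⟨12*A, C * ip d γ (k1e1 d k hd), f, ?_⟩
    have hKB : ∀ m n : Fin d → ℤ, α (L d m) (L d n)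
        = 12*A * alpha1 d Q γ k hd (L d m) (L d n)
          + (C * ip d γ (k1e1 d k hd)) * alpha2 d Q γ k hd (L d m) (L d n)
          + f (br d Q γ (L d m) (L d n)) := by
      intro m n
      rw [br_LL, hfs]
      simp only [alpha1, alpha2, L]
      rw [pair_single, pair_single, one_mul, one_mul]
      by_cases hmn : m + n = 0
      · have hn : n = -m := eq_neg_of_add_eq_zero_right hmn
        subst hn
        have hadd : m + -m = 0 := by abel
        have hLφ : α (Finsupp.single m 1) (Finsupp.single (-m) 1) = φ m := by
          simp only [hφ, L]
        rw [hLφ, hadd]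
        have hF0 : F 0 = -(A+B)/(2 * ip d γ (k1e1 d k hd)) := by
          rw [hF]; simp
        rw [hF0]
        by_cases hm : m ∈ Rset d Q
        · rw [if_pos ⟨hm, rfl⟩, if_neg (fun hcon => hcon.1 hm)]
          rw [sc_diag_R hd hRNF γ hm, hAB m hm]
          field_simp [hGe]
          ring
        · rw [if_neg (fun hcon => hm hcon.1), if_pos ⟨hm, rfl⟩]
          rw [sc_diag_N hd hRNF hQ γ hm, hC2 m hm]
          field_simp [hGe]
          ring
      · rw [if_neg (fun hcon => hmn hcon.2), if_neg (fun hcon => hmn hcon.2)]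
        have hFmn : F (m + n) = -(α (L d (m+n)) (L d 0)) / ip d γ (m+n) := by
          rw [hF]; simp only []; rw [if_neg hmn]
        rw [hFmn]
        have hipmn : ip d γ (m+n) ≠ 0 := generic_ne hγ hmn
        have h := hdeg m n hmn
        rw [L, L] at h
        field_simp
        linear_combination h
    intro x y
    induction x using Finsupp.induction_linear with
    | zero =>
      rw [map_zero, LinearMap.zero_apply, br_zero_left, map_zero]
      simp only [alpha1, alpha2]
      rw [pair_zero_left, pair_zero_left]
      ring
    | add u v hu hv =>
      rw [map_add, LinearMap.add_apply, br_add_left, map_add]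
      simp only [alpha1, alpha2] at hu hv ⊢
      rw [pair_add_left, pair_add_left]
      linear_combination hu + hv
    | single m a =>
      induction y using Finsupp.induction_linear with
      | zero =>
        rw [map_zero, br_zero_right, map_zero]
        simp only [alpha1, alpha2]
        rw [pair_zero_right, pair_zero_right]
        ring
      | add u v hu hv =>
        rw [map_add, br_add_right, map_add]
        simp only [alpha1, alpha2] at hu hv ⊢
        rw [pair_add_right, pair_add_right]
        linear_combination hu + hv
      | single n b =>
        rw [hsingle, hsingle2, br_single]
        simp only [alpha1, alpha2]
        rw [pair_single, pair_single]
        have hsc : Finsupp.single (m+n) (a * b * sc d Q γ m n)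
            = (a*b) • Finsupp.single (m+n) (sc d Q γ m n) := by
          rw [Finsupp.smul_single, smul_eq_mul]
        rw [hsc, map_smul, smul_eq_mul]
        simp only [L]
        have h := hKB m n
        rw [br_LL] at h
        simp only [alpha1, alpha2, L] at h
        rw [pair_single, pair_single] at h
        linear_combination (a*b) * h
  · rintro c1 c2 ⟨f, hf⟩
    have hfs0 : ∀ (c : ℂ), f (Finsupp.single (0 : Fin d → ℤ) c) = c * f (L d 0) := by
      intro c
      have h : Finsupp.single (0 : Fin d → ℤ) c = c • (L d 0) := by
        rw [L, Finsupp.smul_single, smul_eq_mul, mul_one]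
      rw [h, map_smul, smul_eq_mul]
    -- evaluation at (e, -e)
    have h1 := hf (L d (k1e1 d k hd)) (L d (-(k1e1 d k hd)))
    rw [br_LL] at h1
    simp only [alpha1, alpha2, L] at h1
    rw [pair_single, pair_single] at h1
    have hadd1 : k1e1 d k hd + -(k1e1 d k hd) = 0 := by abel
    rw [hadd1] at h1
    rw [if_pos ⟨heR, rfl⟩, if_neg (fun hcon => hcon.1 heR)] at h1
    rw [div_self hGe] at h1
    rw [sc_diag_R hd hRNF γ heR, hfs0] at h1
    have hf0 : f (L d 0) = 0 := by
      have h1' : (0:ℂ) = -(2 * ip d γ (k1e1 d k hd)) * f (L d 0) := by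
        linear_combination h1
      rcases mul_eq_zero.mp h1'.symm with h | h
      · exact absurd h (by simpa using (mul_ne_zero (two_ne_zero) hGe))
      · exact h
    -- evaluation at (2e, -2e)
    have h2eR : (2:ℤ) • k1e1 d k hd ∈ Rset d Q := memR_zsmul hd hRNF heR 2
    have h2 := hf (L d ((2:ℤ) • k1e1 d k hd)) (L d (-((2:ℤ) • k1e1 d k hd)))
    rw [br_LL] at h2
    simp only [alpha1, alpha2, L] at h2
    rw [pair_single, pair_single] at h2
    have hadd2 : (2:ℤ) • k1e1 d k hd + -((2:ℤ) • k1e1 d k hd) = 0 := by abel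
    rw [hadd2] at h2
    rw [if_pos ⟨h2eR, rfl⟩, if_neg (fun hcon => hcon.1 h2eR)] at h2
    rw [sc_diag_R hd hRNF γ h2eR, hfs0, hf0, mul_zero] at h2
    have hip2 : ip d γ ((2:ℤ) • k1e1 d k hd) / ip d γ (k1e1 d k hd) = 2 := by
      rw [ip_zsmul]
      push_cast
      rw [mul_div_assoc, div_self hGe, mul_one]
    rw [hip2] at h2
    have hc1 : c1 = 0 := by
      have : c1 * (((2:ℂ)^3 - 2)/12) = 0 := by linear_combination h2
      have h12 : ((2:ℂ)^3 - 2)/12 ≠ 0 := by norm_num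
      rcases mul_eq_zero.mp this with h | h
      · exact h
      · exact absurd h h12
    -- evaluation at (ε, -ε) with ε = e_1
    have hz0 : (0:ℕ) < z := hRNF.1
    set ε : Fin d → ℤ := Pi.single (Aidx hd 0) 1 with hε
    have hεN : ε ∉ Rset d Q := by
      intro hmem
      have h := (RD_of_memR hd hRNF hmem 0 hz0).1
      rw [hε, Pi.single_eq_same] at h
      have h1' := Int.le_of_dvd one_pos h
      have h2' := k_Aidx_pos hd hRNF hz0
      omega
    have h3 := hf (L d ε) (L d (-ε))
    rw [br_LL] at h3
    simp only [alpha1, alpha2, L] at h3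
    rw [pair_single, pair_single] at h3
    have hadd3 : ε + -ε = 0 := by abel
    rw [hadd3] at h3
    rw [if_neg (fun hcon => hεN hcon.1), if_pos ⟨hεN, rfl⟩] at h3
    rw [sc_diag_N hd hRNF hQ γ hεN] at h3
    rw [show Finsupp.single (0 : Fin d → ℤ) (0:ℂ) = 0 from Finsupp.single_zero 0,
      map_zero] at h3
    have hεne : ip d γ ε ≠ 0 := generic_ne hγ (by
      rw [hε]; exact single_one_ne_zero _)
    have hσε : qsigma d Q ε (-ε) ≠ 0 := by
      rw [qsigma_neg_right hd hRNF hQ]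
      exact inv_ne_zero (qsigma_ne_zero hd hRNF hQ ε ε)
    have hc2 : c2 = 0 := by
      have hprod : qsigma d Q ε (-ε) * (ip d γ ε / ip d γ (k1e1 d k hd)) ≠ 0 :=
        mul_ne_zero hσε (div_ne_zero hεne hGe)
      have h3' : c2 * (qsigma d Q ε (-ε) * (ip d γ ε / ip d γ (k1e1 d k hd))) = 0 := by
        linear_combination h3
      rcases mul_eq_zero.mp h3' with h | h
      · exact h
      · exact absurd h hprod
    exact ⟨hc1, hc2⟩
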